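/- arXiv:1212.1113 — 4 statements merged into one kernel-verified Lean document; each statement's English description precedes it below -/
import Mathlib

section
/- Suppose that for every continuous linear functional S ∈ E₁* satisfying S(F₁(w)) = 0 for all w ∈ ker F₂, there exists a continuous linear functional T ∈ E₂* with T(F₂(v)) = S(F₁(v)) for all v ∈ V. Then there exists a constant C > 0 such that inf_{w ∈ ker F₂} ‖F₁(v) + F₁(w)‖ ≤ C·‖F₂(v)‖ for every v ∈ V. -/
set_option maxHeartbeats 1000000
set_option synthInstance.maxHeartbeats 400000

section Aux

variable {𝕂 : Type*} [RCLike 𝕂]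
    {E₁ E₂ V : Type*}
    [NormedAddCommGroup E₁] [NormedSpace 𝕂 E₁] [CompleteSpace E₁]
    [NormedAddCommGroup E₂] [NormedSpace 𝕂 E₂] [CompleteSpace E₂]
    [AddCommGroup V] [Module 𝕂 V]

/-- The functionals `S` in the dual of `E₁` such that `S ∘ F₁` vanishes on `ker F₂`. -/
def auxM (F₁ : V →ₗ[𝕂] E₁) (F₂ : V →ₗ[𝕂] E₂) : Submodule 𝕂 (E₁ →L[𝕂] 𝕂) where
  carrier := {S | ∀ w ∈ LinearMap.ker F₂, S (F₁ w) = 0}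
  add_mem' := fun {a b} ha hb w hw => by
    simp [ContinuousLinearMap.add_apply, ha w hw, hb w hw]
  zero_mem' := fun w _ => rfl
  smul_mem' := fun c S hS w hw => by simp [hS w hw]

lemma mem_auxM {F₁ : V →ₗ[𝕂] E₁} {F₂ : V →ₗ[𝕂] E₂} {S : E₁ →L[𝕂] 𝕂} :
    S ∈ auxM F₁ F₂ ↔ ∀ w ∈ LinearMap.ker F₂, S (F₁ w) = 0 := Iff.rfl

lemma isClosed_auxM (F₁ : V →ₗ[𝕂] E₁) (F₂ : V →ₗ[𝕂] E₂) :
    IsClosed ((auxM F₁ F₂ : Submodule 𝕂 (E₁ →L[𝕂] 𝕂)) : Set (E₁ →L[𝕂] 𝕂)) := by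
  have h : ((auxM F₁ F₂ : Submodule 𝕂 (E₁ →L[𝕂] 𝕂)) : Set (E₁ →L[𝕂] 𝕂)) =
      ⋂ w : V, ⋂ (_ : w ∈ LinearMap.ker F₂), {S : E₁ →L[𝕂] 𝕂 | S (F₁ w) = 0} := by
    ext S
    simp only [Set.mem_iInter, Set.mem_setOf_eq, SetLike.mem_coe, mem_auxM]
  rw [h]
  exact isClosed_iInter fun w => isClosed_iInter fun _ =>
    isClosed_eq (ContinuousLinearMap.apply 𝕂 𝕂 (F₁ w)).continuous continuous_const

end Aux

/-- Fichera-type duality lemma, necessity: if every `S ∈ E₁*` with `S ∘ F₁` vanishing on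
`ker F₂` admits `T ∈ E₂*` with `T ∘ F₂ = S ∘ F₁`, then there is a constant `C > 0` with
`inf_{w ∈ ker F₂} ‖F₁ v + F₁ w‖ ≤ C ‖F₂ v‖` for every `v`. -/
theorem stmt2 {𝕂 : Type*} [RCLike 𝕂]
    {E₁ E₂ V : Type*}
    [NormedAddCommGroup E₁] [NormedSpace 𝕂 E₁] [CompleteSpace E₁]
    [NormedAddCommGroup E₂] [NormedSpace 𝕂 E₂] [CompleteSpace E₂]
    [AddCommGroup V] [Module 𝕂 V]
    (F₁ : V →ₗ[𝕂] E₁) (F₂ : V →ₗ[𝕂] E₂)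
    (hsolv : ∀ S : E₁ →L[𝕂] 𝕂, (∀ w ∈ LinearMap.ker F₂, S (F₁ w) = 0) →
      ∃ T : E₂ →L[𝕂] 𝕂, ∀ v : V, T (F₂ v) = S (F₁ v)) :
    ∃ C : ℝ, 0 < C ∧
      ∀ v : V, (⨅ w : LinearMap.ker F₂, ‖F₁ v + F₁ (w : V)‖) ≤ C * ‖F₂ v‖ := by
  classical
  haveI hMcomplete : CompleteSpace (auxM F₁ F₂) :=
    (isClosed_auxM F₁ F₂).completeSpace_coe
  -- Banach–Steinhaus family: normalized evaluations
  set g : {v : V // F₂ v ≠ 0} → (auxM F₁ F₂) →L[𝕂] 𝕂 := fun i =>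
    (‖F₂ (i : V)‖⁻¹ : ℝ) •
      ((ContinuousLinearMap.apply 𝕂 𝕂 (F₁ (i : V))).comp (auxM F₁ F₂).subtypeL) with hg
  have hgapp : ∀ (i : {v : V // F₂ v ≠ 0}) (S : auxM F₁ F₂),
      ‖g i S‖ = ‖F₂ (i : V)‖⁻¹ * ‖(S : E₁ →L[𝕂] 𝕂) (F₁ (i : V))‖ := by
    intro i S
    simp only [hg, ContinuousLinearMap.smul_apply, ContinuousLinearMap.comp_apply,
      Submodule.coe_subtypeL', Submodule.coe_subtype, ContinuousLinearMap.apply_apply,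
      norm_smul, Real.norm_eq_abs, abs_inv, abs_norm]
  have hpt : ∀ S : auxM F₁ F₂, ∃ C, ∀ i, ‖g i S‖ ≤ C := by
    intro S
    obtain ⟨T, hT⟩ := hsolv (S : E₁ →L[𝕂] 𝕂) S.2
    refine ⟨‖T‖, fun i => ?_⟩
    have hFi : 0 < ‖F₂ (i : V)‖ := norm_pos_iff.mpr i.2
    rw [hgapp i S, ← hT (i : V)]
    rw [inv_mul_le_iff₀ hFi, mul_comm]
    exact T.le_opNorm _
  obtain ⟨C', hC'⟩ :=
    @banach_steinhaus (auxM F₁ F₂) 𝕂 𝕂 𝕂 _ _ _ _ _ _ (RingHom.id 𝕂) _ _ _ g hpt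
  set C : ℝ := max C' 0 + 1 with hC
  have hCpos : 0 < C := by positivity
  -- the key uniform estimate
  have key : ∀ S : E₁ →L[𝕂] 𝕂, S ∈ auxM F₁ F₂ → ‖S‖ ≤ 1 →
      ∀ v : V, ‖S (F₁ v)‖ ≤ C * ‖F₂ v‖ := by
    intro S hSmem hSnorm v
    by_cases hv : F₂ v = 0
    · have : S (F₁ v) = 0 := hSmem v (LinearMap.mem_ker.mpr hv)
      simp [this, hv]
    · have hFi : 0 < ‖F₂ v‖ := norm_pos_iff.mpr hv
      set SM : auxM F₁ F₂ := ⟨S, hSmem⟩ with hSM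
      have h1 : ‖g ⟨v, hv⟩ SM‖ ≤ max C' 0 := by
        have e1 := (g ⟨v, hv⟩).le_opNorm (σ₁₂ := RingHom.id 𝕂) SM
        have e2 := le_trans (hC' ⟨v, hv⟩) (le_max_left C' 0)
        have e6 : ‖SM‖ ≤ 1 := hSnorm
        have e7 := mul_le_mul e2 e6 (norm_nonneg SM) (le_max_right C' 0)
        rw [mul_one] at e7
        linarith
      have h2 : ‖S (F₁ v)‖ = ‖F₂ v‖ * ‖g ⟨v, hv⟩ SM‖ := by
        rw [hgapp ⟨v, hv⟩ SM]
        field_simp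
        rfl
      rw [h2]
      calc ‖F₂ v‖ * ‖g ⟨v, hv⟩ SM‖ ≤ ‖F₂ v‖ * max C' 0 :=
            mul_le_mul_of_nonneg_left h1 (norm_nonneg _)
        _ ≤ ‖F₂ v‖ * C := by
            refine mul_le_mul_of_nonneg_left ?_ (norm_nonneg _)
            rw [hC]
            have := le_max_left C' (0 : ℝ)
            linarith
        _ = C * ‖F₂ v‖ := mul_comm _ _
  refine ⟨C, hCpos, fun v => ?_⟩
  -- the closed subspace N and the quotient E₁ ⧸ N
  set N : Submodule 𝕂 E₁ := ((LinearMap.ker F₂).map F₁).topologicalClosure with hN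
  haveI hNclosed : IsClosed (N : Set E₁) := Submodule.isClosed_topologicalClosure _
  set x : E₁ := F₁ v with hx
  set y : E₁ ⧸ N := Submodule.Quotient.mk x with hy
  have hbdd : BddBelow (Set.range fun w : LinearMap.ker F₂ => ‖F₁ v + F₁ (w : V)‖) := by
    refine ⟨0, ?_⟩
    rintro r ⟨w, rfl⟩
    exact norm_nonneg _
  -- Step 1 : the infimum is at most ‖y‖
  have step1 : (⨅ w : LinearMap.ker F₂, ‖F₁ v + F₁ (w : V)‖) ≤ ‖y‖ := by
    refine le_of_forall_pos_le_add ?_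
    intro ε hε
    obtain ⟨m, hm, hmlt⟩ := Submodule.Quotient.norm_mk_lt y (half_pos hε)
    have hmem : m - x ∈ N := (Submodule.Quotient.eq _).mp hm
    have hclos : m - x ∈ closure (((LinearMap.ker F₂).map F₁ : Submodule 𝕂 E₁) : Set E₁) := by
      rw [← Submodule.topologicalClosure_coe]
      exact hmem
    obtain ⟨b, hb, hdist⟩ := Metric.mem_closure_iff.mp hclos (ε / 2) (half_pos hε)
    obtain ⟨w₀, hw₀, rfl⟩ := Submodule.mem_map.mp hb
    have keyw : ‖F₁ v + F₁ w₀‖ ≤ ‖m‖ + ε / 2 := by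
      have h1 : ‖(F₁ v + F₁ w₀) - m‖ < ε / 2 := by
        have heq : (F₁ v + F₁ w₀) - m = -((m - x) - F₁ w₀) := by
          rw [hx]; abel
        rw [heq, norm_neg, ← dist_eq_norm]
        exact hdist
      calc ‖F₁ v + F₁ w₀‖ = ‖m + ((F₁ v + F₁ w₀) - m)‖ := by
            congr 1; abel
        _ ≤ ‖m‖ + ‖(F₁ v + F₁ w₀) - m‖ := norm_add_le _ _
        _ ≤ ‖m‖ + ε / 2 := by linarith
    have hle : (⨅ w : LinearMap.ker F₂, ‖F₁ v + F₁ (w : V)‖) ≤ ‖F₁ v + F₁ w₀‖ :=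
      ciInf_le hbdd (⟨w₀, hw₀⟩ : LinearMap.ker F₂)
    calc (⨅ w : LinearMap.ker F₂, ‖F₁ v + F₁ (w : V)‖) ≤ ‖F₁ v + F₁ w₀‖ := hle
      _ ≤ ‖m‖ + ε / 2 := keyw
      _ ≤ (‖y‖ + ε / 2) + ε / 2 := by linarith
      _ = ‖y‖ + ε := by ring
  -- Step 2 : ‖y‖ ≤ C * ‖F₂ v‖
  have step2 : ‖y‖ ≤ C * ‖F₂ v‖ := by
    by_cases hy0 : y = 0
    · rw [hy0, norm_zero]
      positivity
    obtain ⟨f, hf1, hfy⟩ := exists_dual_vector 𝕂 y (norm_ne_zero_iff.mpr hy0)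
    -- the quotient map as a continuous linear map
    set mkC : E₁ →L[𝕂] (E₁ ⧸ N) :=
      LinearMap.mkContinuous N.mkQ 1 (fun z => by
        simpa using Submodule.Quotient.norm_mk_le N z) with hmkC
    set S : E₁ →L[𝕂] 𝕂 := f.comp mkC with hS
    have hSmem : S ∈ auxM F₁ F₂ := by
      intro w hw
      have hwN : F₁ w ∈ N := Submodule.le_topologicalClosure _ (Submodule.mem_map_of_mem hw)
      have hz : mkC (F₁ w) = 0 := (Submodule.Quotient.mk_eq_zero N).mpr hwN
      simp [hS, ContinuousLinearMap.comp_apply, hz]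
    have hSnorm : ‖S‖ ≤ 1 := by
      calc ‖S‖ ≤ ‖f‖ * ‖mkC‖ := ContinuousLinearMap.opNorm_comp_le _ _
        _ ≤ 1 * 1 := by
          refine mul_le_mul hf1.le (LinearMap.mkContinuous_norm_le _ zero_le_one _)
            (ContinuousLinearMap.opNorm_nonneg _) (by norm_num [hf1])
        _ = 1 := one_mul 1
    have hynorm : ‖y‖ = ‖S (F₁ v)‖ := by
      have h1 : S (F₁ v) = f y := by
        simp only [hS, ContinuousLinearMap.comp_apply]
        congr 1
      rw [h1, hfy, RCLike.norm_ofReal, abs_norm]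
    rw [hynorm]
    exact key S hSmem hSnorm v
  exact step1.trans step2
end

section
/- Let E ⊆ U ⊆ X with U open and H^s(E) < ∞. Then for every ε > 0 there exist a countable family of points p_k ∈ X and radii r_k ≥ 0 such that E is contained in the union of the closed balls B̄(p_k, r_k), the doubled closed balls B̄(p_k, 2·r_k) are all contained in U, and ∑_k r_k^s ≤ H^s(E) + ε. -/
open MeasureTheory Set Metric

/-- If `E ⊆ U` with `U` open and `E` has finite `s`-dimensional Hausdorff measure, then
for every `ε > 0` there is a countable family of closed balls covering `E`, whose doubled
closed balls lie in `U`, and whose radii satisfy `∑ rₖ^s ≤ H^s(E) + ε`. -/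
theorem stmt6 {X : Type*} [MetricSpace X] [MeasurableSpace X] [BorelSpace X]
    (s : ℝ) (hs : 0 < s) (E U : Set X) (hEU : E ⊆ U) (hU : IsOpen U)
    (hE : μH[s] E < ⊤) :
    ∀ ε : ℝ, 0 < ε →
      ∃ c : Set (X × ℝ), c.Countable ∧
        (∀ q ∈ c, 0 ≤ q.2) ∧
        (E ⊆ ⋃ q ∈ c, Metric.closedBall q.1 q.2) ∧
        (∀ q ∈ c, Metric.closedBall q.1 (2 * q.2) ⊆ U) ∧
        ∑' q : c, ENNReal.ofReal ((q : X × ℝ).2 ^ s) ≤ μH[s] E + ENNReal.ofReal ε := by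
  intro ε hε
  rcases E.eq_empty_or_nonempty with rfl | ⟨p₀, hp₀⟩
  · exact ⟨∅, countable_empty, by simp, by simp, by simp, by simp⟩
  classical
  -- annuli
  set f : X → ℝ := fun x => Metric.infDist x Uᶜ with hf
  set B : ℕ → Set X := fun n =>
    if Uᶜ.Nonempty then f ⁻¹' Set.Ioi (1 / (n + 1)) else Set.univ with hBdef
  have hBmeas : ∀ n, MeasurableSet (B n) := by
    intro n
    simp only [hBdef]
    split_ifs
    · exact (isOpen_Ioi.preimage (Metric.continuous_infDist_pt _)).measurableSet
    · exact MeasurableSet.univ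
  set A : ℕ → Set X := disjointed B with hAdef
  have hAmeas : ∀ n, MeasurableSet (A n) := MeasurableSet.disjointed hBmeas
  have hAdisj : Pairwise (Function.onFun Disjoint A) := disjoint_disjointed B
  have hEA : E ⊆ ⋃ n, A n := by
    rw [hAdef, iUnion_disjointed]
    intro x hx
    by_cases hUc : Uᶜ.Nonempty
    · have hxU : x ∈ U := hEU hx
      have hfx : 0 < f x := by
        rw [← hU.isClosed_compl.notMem_iff_infDist_pos hUc]
        simpa using hxU
      obtain ⟨n, hn⟩ := exists_nat_one_div_lt hfx
      refine Set.mem_iUnion.2 ⟨n, ?_⟩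
      simp only [hBdef, if_pos hUc, Set.mem_preimage, Set.mem_Ioi]
      exact hn
    · exact Set.mem_iUnion.2 ⟨0, by simp [hBdef, hUc]⟩
  have hkey : ∀ n, ∀ p ∈ A n, Metric.closedBall p (1 / (3 * (n + 1))) ⊆ U := by
    intro n p hp y hy
    have hpB : p ∈ B n := disjointed_subset B n hp
    by_cases hUc : Uᶜ.Nonempty
    · simp only [hBdef, if_pos hUc, Set.mem_preimage, Set.mem_Ioi] at hpB
      by_contra hyU
      have : f p ≤ dist p y := Metric.infDist_le_dist_of_mem hyU
      rw [Metric.mem_closedBall, dist_comm] at hy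
      have h1 : (1 : ℝ) / (3 * (n + 1)) < 1 / (n + 1) := by
        apply div_lt_div_of_pos_left one_pos (by positivity)
        nlinarith [Nat.cast_nonneg (α := ℝ) n]
      linarith [this.trans hy]
    · have : Uᶜ = ∅ := Set.not_nonempty_iff_eq_empty.1 hUc
      have : U = Set.univ := by simpa [Set.compl_empty_iff] using this
      simp [this]
  -- errors
  obtain ⟨ε', hε'pos, hε'sum⟩ :=
    ENNReal.exists_pos_sum_of_countable' (ε := ENNReal.ofReal ε)
      (by simp [hε, ENNReal.ofReal_eq_zero.not.2 (not_le.2 hε)]) ℕ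
  -- covers for each annulus
  set S : ℕ → Set X := fun n => E ∩ A n with hSdef
  have hSfin : ∀ n, μH[s] (S n) < ⊤ :=
    fun n => lt_of_le_of_lt (measure_mono Set.inter_subset_left) hE
  have hcov : ∀ n, ∃ t : ℕ → Set X, S n ⊆ ⋃ k, t k ∧
      (∀ k, EMetric.diam (t k) ≤ ENNReal.ofReal (1 / (6 * (n + 1)))) ∧
      ∑' k, ⨆ _ : (t k).Nonempty, EMetric.diam (t k) ^ s ≤ μH[s] (S n) + ε' n := by
    intro n
    have happly := Measure.hausdorffMeasure_apply s (S n)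
    have hδpos : (0 : ENNReal) < ENNReal.ofReal (1 / (6 * (n + 1))) := by
      rw [ENNReal.ofReal_pos]; positivity
    have hle : (⨅ (t : ℕ → Set X) (_ : S n ⊆ ⋃ k, t k)
        (_ : ∀ k, EMetric.diam (t k) ≤ ENNReal.ofReal (1 / (6 * (n + 1)))),
          ∑' k, ⨆ _ : (t k).Nonempty, EMetric.diam (t k) ^ s) ≤ μH[s] (S n) := by
      rw [happly]
      exact le_iSup₂ (f := fun r (_ : 0 < r) => ⨅ (t : ℕ → Set X) (_ : S n ⊆ ⋃ k, t k)
        (_ : ∀ k, EMetric.diam (t k) ≤ r),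
          ∑' k, ⨆ _ : (t k).Nonempty, EMetric.diam (t k) ^ s) _ hδpos
    have hlt : (⨅ (t : ℕ → Set X) (_ : S n ⊆ ⋃ k, t k)
        (_ : ∀ k, EMetric.diam (t k) ≤ ENNReal.ofReal (1 / (6 * (n + 1)))),
          ∑' k, ⨆ _ : (t k).Nonempty, EMetric.diam (t k) ^ s) < μH[s] (S n) + ε' n :=
      lt_of_le_of_lt hle (ENNReal.lt_add_right (hSfin n).ne (hε'pos n).ne')
    simp only [iInf_lt_iff] at hlt
    obtain ⟨t, ht1, ht2, ht3⟩ := hlt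
    exact ⟨t, ht1, ht2, ht3.le⟩
  choose t ht1 ht2 ht3 using hcov
  set t' : ℕ → ℕ → Set X := fun n k => t n k ∩ S n with ht'def
  have ht'd : ∀ n k, EMetric.diam (t' n k) ≠ ⊤ := by
    intro n k
    exact (((EMetric.diam_mono Set.inter_subset_left).trans (ht2 n k)).trans_lt
      ENNReal.ofReal_lt_top).ne
  set F : ℕ × ℕ → X × ℝ := fun nk =>
    if h : (t' nk.1 nk.2).Nonempty then (h.some, (EMetric.diam (t' nk.1 nk.2)).toReal)
    else (p₀, 0) with hFdef
  refine ⟨Set.range F, Set.countable_range F, ?_, ?_, ?_, ?_⟩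
  · rintro q ⟨nk, rfl⟩
    simp only [hFdef]
    split_ifs <;> simp [ENNReal.toReal_nonneg]
  · -- cover
    intro x hx
    obtain ⟨n, hn⟩ := Set.mem_iUnion.1 (hEA hx)
    have hxS : x ∈ S n := ⟨hx, hn⟩
    obtain ⟨k, hk⟩ := Set.mem_iUnion.1 (ht1 n hxS)
    have hx' : x ∈ t' n k := ⟨hk, hxS⟩
    have hne : (t' n k).Nonempty := ⟨x, hx'⟩
    refine Set.mem_biUnion (Set.mem_range_self (n, k)) ?_
    show x ∈ Metric.closedBall (F (n, k)).1 (F (n, k)).2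
    simp only [hFdef, dif_pos hne]
    rw [Metric.mem_closedBall, dist_edist]
    exact ENNReal.toReal_mono (ht'd n k) (EMetric.edist_le_diam_of_mem hx' hne.some_mem)
  · -- doubled balls
    rintro q ⟨⟨n, k⟩, rfl⟩
    simp only [hFdef]
    split_ifs with h
    · have hmem : h.some ∈ A n := h.some_mem.2.2
      show Metric.closedBall h.some (2 * (EMetric.diam (t' n k)).toReal) ⊆ U
      refine (Metric.closedBall_subset_closedBall ?_).trans (hkey n _ hmem)
      have hd : (EMetric.diam (t' n k)).toReal ≤ 1 / (6 * (n + 1)) := by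
        rw [← ENNReal.toReal_ofReal (le_of_lt (by positivity : (0:ℝ) < 1 / (6 * (n + 1))))]
        exact ENNReal.toReal_mono (by simp)
          ((EMetric.diam_mono Set.inter_subset_left).trans (ht2 n k))
      rw [show (1:ℝ) / (3 * (n + 1)) = 2 * (1 / (6 * (n + 1))) by field_simp; ring]
      linarith
    · simp only [mul_zero, Metric.closedBall_zero]
      exact Set.singleton_subset_iff.2 (hEU hp₀)
  · -- the sum
    have step1 : ∑' q : (Set.range F), ENNReal.ofReal ((q : X × ℝ).2 ^ s)
        ≤ ∑' nk : ℕ × ℕ, ENNReal.ofReal ((F nk).2 ^ s) :=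
      ENNReal.tsum_le_tsum_comp_of_surjective Set.rangeFactorization_surjective
        (fun q : Set.range F => ENNReal.ofReal ((q : X × ℝ).2 ^ s))
    have step2 : ∀ nk : ℕ × ℕ, ENNReal.ofReal ((F nk).2 ^ s)
        ≤ ⨆ _ : (t nk.1 nk.2).Nonempty, EMetric.diam (t nk.1 nk.2) ^ s := by
      rintro ⟨n, k⟩
      simp only [hFdef]
      split_ifs with h
      · have htne : (t n k).Nonempty := h.mono Set.inter_subset_left
        rw [iSup_pos htne]
        have h1 : ENNReal.ofReal ((EMetric.diam (t' n k)).toReal ^ s)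
            = EMetric.diam (t' n k) ^ s := by
          rw [ENNReal.toReal_rpow, ENNReal.ofReal_toReal
            (ENNReal.rpow_ne_top_of_nonneg hs.le (ht'd n k))]
        rw [h1]
        exact ENNReal.rpow_le_rpow (EMetric.diam_mono Set.inter_subset_left) hs.le
      · simp [Real.zero_rpow hs.ne']
    have step3 : ∑' nk : ℕ × ℕ, ENNReal.ofReal ((F nk).2 ^ s)
        ≤ ∑' n, (μH[s] (S n) + ε' n) := by
      have hprod : ∑' nk : ℕ × ℕ, ENNReal.ofReal ((F nk).2 ^ s)
          = ∑' n, ∑' k, ENNReal.ofReal ((F (n, k)).2 ^ s) := by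
        rw [← ENNReal.tsum_prod (f := fun n k => ENNReal.ofReal ((F (n, k)).2 ^ s))]
      rw [hprod]
      exact ENNReal.tsum_le_tsum fun n =>
        (ENNReal.tsum_le_tsum fun k => step2 (n, k)).trans (ht3 n)
    have step4 : ∑' n, μH[s] (S n) ≤ μH[s] E := by
      set E' := toMeasurable μH[s] E with hE'
      have h1 : ∀ n, μH[s] (S n) ≤ μH[s] (E' ∩ A n) := fun n =>
        measure_mono (Set.inter_subset_inter_left _ (subset_toMeasurable _ _))
      calc ∑' n, μH[s] (S n) ≤ ∑' n, μH[s] (E' ∩ A n) := ENNReal.tsum_le_tsum h1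
        _ = μH[s] (⋃ n, E' ∩ A n) := (measure_iUnion
            (hAdisj.mono fun i j h => h.mono Set.inter_subset_right Set.inter_subset_right)
            (fun n => (measurableSet_toMeasurable _ _).inter (hAmeas n))).symm
        _ ≤ μH[s] E' := measure_mono (Set.iUnion_subset fun n => Set.inter_subset_left)
        _ = μH[s] E := measure_toMeasurable E
    calc ∑' q : (Set.range F), ENNReal.ofReal ((q : X × ℝ).2 ^ s)
        ≤ ∑' n, (μH[s] (S n) + ε' n) := step1.trans step3
      _ = ∑' n, μH[s] (S n) + ∑' n, ε' n := ENNReal.tsum_add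
      _ ≤ μH[s] E + ENNReal.ofReal ε := add_le_add step4 hε'sum.le
end

section
/- Let Φ : H → ℂ be holomorphic on all of H and suppose Φ(g(z,w)) = 0 for all z, w ∈ ℂ with |z| < 1 and |w| < 1 (i.e., Φ vanishes on the image of the bidisc under g). Then the Fréchet derivative of Φ at the origin 0 ∈ H is the zero functional. In particular, no hypersurface {Φ = 0} with Φ holomorphic and dΦ(0) ≠ 0 can contain the image of g near 0. -/
open scoped ENNReal

lemma gvec_mem (w : ℂ) (hw : ‖w‖ < 1) : Memℓp (fun n : ℕ => w ^ n) 2 := by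
  apply memℓp_gen
  have h2 : (2 : ℝ≥0∞).toReal = 2 := by norm_num
  rw [h2]
  have : Summable (fun n : ℕ => (‖w‖ ^ 2) ^ n) :=
    summable_geometric_of_lt_one (by positivity) (by
      nlinarith [norm_nonneg w])
  apply this.congr
  intro n
  rw [norm_pow, ← pow_mul, Nat.mul_comm 2 n, pow_mul]; norm_num

/-- If `Φ : ℓ²(ℕ, ℂ) → ℂ` is holomorphic on all of `H = ℓ²(ℕ, ℂ)` and vanishes on every
point of the form `(z·wⁿ)ₙ` with `|z| < 1`, `|w| < 1`, then the Fréchet derivative of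
`Φ` at the origin is zero. -/
theorem stmt9 (Φ : lp (fun _ : ℕ => ℂ) 2 → ℂ)
    (hΦ : AnalyticOnNhd ℂ Φ Set.univ)
    (hvan : ∀ x : lp (fun _ : ℕ => ℂ) 2,
      (∃ z w : ℂ, ‖z‖ < 1 ∧ ‖w‖ < 1 ∧ ∀ n : ℕ, (x : ∀ _ : ℕ, ℂ) n = z * w ^ n) →
      Φ x = 0) :
    fderiv ℂ Φ 0 = 0 := by
  set f : lp (fun _ : ℕ => ℂ) 2 →L[ℂ] ℂ := fderiv ℂ Φ 0 with hfdef
  have hdiff : DifferentiableAt ℂ Φ 0 := (hΦ 0 trivial).differentiableAt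
  -- the geometric vector
  have h2top : (2 : ℝ≥0∞) ≠ ⊤ := by norm_num
  have h2pos : 0 < (2 : ℝ≥0∞).toReal := by norm_num
  -- Step 1: directional derivatives along gvec w vanish
  have hdir : ∀ (w : ℂ) (hw : ‖w‖ < 1),
      f (⟨fun n : ℕ => w ^ n, gvec_mem w hw⟩ : lp (fun _ : ℕ => ℂ) 2) = 0 := by
    intro w hw
    set v : lp (fun _ : ℕ => ℂ) 2 := ⟨fun n : ℕ => w ^ n, gvec_mem w hw⟩ with hv
    set L : ℂ →L[ℂ] lp (fun _ : ℕ => ℂ) 2 := ContinuousLinearMap.toSpanSingleton ℂ v with hL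
    have hzero : (fun z => Φ (L z)) =ᶠ[nhds (0 : ℂ)] (fun _ => 0) := by
      filter_upwards [Metric.ball_mem_nhds (0 : ℂ) one_pos] with z hz
      apply hvan
      refine ⟨z, w, by simpa using hz, hw, fun n => ?_⟩
      have : ((L z : lp (fun _ : ℕ => ℂ) 2) : ∀ _ : ℕ, ℂ) n = z • ((v : ∀ _ : ℕ, ℂ) n) := by
        rw [hL]
        simp [ContinuousLinearMap.toSpanSingleton_apply]
      rw [this]
      rfl
    have hcomp : fderiv ℂ (fun z => Φ (L z)) 0 = 0 := by
      rw [hzero.fderiv_eq]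
      exact fderiv_const_apply 0
    have hchain : fderiv ℂ (Φ ∘ L) 0 = (fderiv ℂ Φ (L 0)).comp (fderiv ℂ L 0) :=
      fderiv_comp 0 (by simpa using hdiff) L.differentiableAt
    rw [L.fderiv] at hchain
    have hL0 : L 0 = 0 := map_zero L
    rw [hL0] at hchain
    have : (fderiv ℂ Φ 0).comp L = 0 := by
      rw [← hchain]; exact hcomp
    have h1 := congrFun (congrArg DFunLike.coe this) 1
    simp only [ContinuousLinearMap.comp_apply, ContinuousLinearMap.zero_apply] at h1
    rw [hL, ContinuousLinearMap.toSpanSingleton_apply, one_smul] at h1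
    exact h1
  -- coefficients
  set c : ℕ → ℂ := fun n => f (lp.single 2 n 1) with hc
  -- Step 2: for each |w| < 1, HasSum (fun n => w^n * c n) 0
  have hsum : ∀ w : ℂ, ‖w‖ < 1 → HasSum (fun n : ℕ => w ^ n * c n) 0 := by
    intro w hw
    set v : lp (fun _ : ℕ => ℂ) 2 := ⟨fun n : ℕ => w ^ n, gvec_mem w hw⟩ with hv
    have hs : HasSum (fun n : ℕ => lp.single 2 n ((v : ∀ _ : ℕ, ℂ) n)) v :=
      lp.hasSum_single h2top v
    have hs2 : HasSum (fun n : ℕ => f (lp.single 2 n ((v : ∀ _ : ℕ, ℂ) n))) (f v) :=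
      hs.mapL f
    rw [hdir w hw] at hs2
    apply hs2.congr_fun
    intro n
    have : (v : ∀ _ : ℕ, ℂ) n = w ^ n := rfl
    rw [this]
    have : lp.single (E := fun _ : ℕ => ℂ) 2 n (w ^ n) = (w ^ n) • lp.single 2 n 1 := by
      rw [← lp.single_smul]
      norm_num
    rw [this, map_smul, smul_eq_mul]
  -- Step 3: bound on c
  have hbound : ∀ n, ‖c n‖ ≤ ‖f‖ := by
    intro n
    calc ‖c n‖ ≤ ‖f‖ * ‖lp.single (E := fun _ : ℕ => ℂ) 2 n 1‖ := f.le_opNorm _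
    _ ≤ ‖f‖ := by
        have : ‖lp.single (E := fun _ : ℕ => ℂ) 2 n 1‖ = ‖(1 : ℂ)‖ :=
          lp.norm_single (E := fun _ : ℕ => ℂ) (p := 2) (by norm_num) n (1 : ℂ)
        rw [this]; simp
  -- power series
  set p : FormalMultilinearSeries ℂ ℂ ℂ :=
    fun n => ContinuousMultilinearMap.mkPiRing ℂ (Fin n) (c n) with hp
  have hrad : 1 ≤ p.radius := by
    apply ENNReal.le_of_forall_nnreal_lt
    intro r hr
    apply p.le_radius_of_bound ‖f‖
    intro n
    have hpn : ‖p n‖ = ‖c n‖ := ContinuousMultilinearMap.norm_mkPiRing _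
    have hr' : r < 1 := ENNReal.coe_lt_one_iff.mp hr
    have hr1 : (r : ℝ) ^ n ≤ 1 := by
      apply pow_le_one₀ r.coe_nonneg
      exact_mod_cast hr'.le
    calc ‖p n‖ * (r : ℝ) ^ n ≤ ‖c n‖ * 1 := by
          rw [hpn]; exact mul_le_mul_of_nonneg_left hr1 (norm_nonneg _)
    _ ≤ ‖f‖ := by rw [mul_one]; exact hbound n
  have hps : HasFPowerSeriesOnBall (fun _ : ℂ => (0 : ℂ)) p 0 1 :=
    { r_le := hrad
      r_pos := one_pos
      hasSum := by
        intro y hy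
        rw [mem_emetric_ball_zero_iff] at hy
        have hy' : ‖y‖ < 1 := by
          have := hy
          rw [← ofReal_norm, ENNReal.ofReal_lt_one] at this
          exact_mod_cast this
        have := hsum y hy'
        apply this.congr_fun
        intro n
        rw [hp]
        simp [ContinuousMultilinearMap.mkPiRing_apply, Finset.prod_const, smul_eq_mul] }
  have hp0 : p = 0 := hps.hasFPowerSeriesAt.eq_zero
  have hcn : ∀ n, c n = 0 := by
    intro n
    have : p n = 0 := by rw [hp0]; rfl
    have h1 : (p n) (fun _ => (1 : ℂ)) = 0 := by rw [this]; rfl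
    rw [hp] at h1
    simpa [ContinuousMultilinearMap.mkPiRing_apply] using h1
  -- Step 4: f = 0
  ext x
  have hs : HasSum (fun n : ℕ => f (lp.single 2 n ((x : ∀ _ : ℕ, ℂ) n))) (f x) :=
    (lp.hasSum_single h2top x).mapL f
  have hz : ∀ n : ℕ, f (lp.single 2 n ((x : ∀ _ : ℕ, ℂ) n)) = 0 := by
    intro n
    have : lp.single (E := fun _ : ℕ => ℂ) 2 n ((x : ∀ _ : ℕ, ℂ) n)
        = ((x : ∀ _ : ℕ, ℂ) n) • lp.single 2 n 1 := by
      rw [← lp.single_smul]; norm_num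
    rw [this, map_smul, smul_eq_mul,
      show f (lp.single 2 n 1) = c n from rfl, hcn n, mul_zero]
  have : HasSum (fun _ : ℕ => (0 : ℂ)) (f x) := hs.congr_fun (fun n => (hz n).symm)
  have := this.unique hasSum_zero
  simpa using this
end

section
/- The map f : 𝔻 → c₀ given by f(z) = (zⁿ)_{n∈ℕ} is holomorphic on 𝔻, injective, takes values in the closed unit ball of c₀ (‖f(z)‖ ≤ 1 for all z ∈ 𝔻), and is proper: for every compact subset K ⊆ c₀, the preimage f⁻¹(K) is a compact subset of the open disc 𝔻. -/
set_option maxHeartbeats 1000000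
set_option synthInstance.maxHeartbeats 400000


open ZeroAtInfty Filter Metric

noncomputable section Aux12

private def fseq12 (z : ℂ) (hz : ‖z‖ < 1) : C₀(ℕ, ℂ) where
  toFun := fun n => z ^ n
  continuous_toFun := continuous_of_discreteTopology
  zero_at_infty' := by
    rw [cocompact_eq_cofinite, Nat.cofinite_eq_atTop]
    exact tendsto_pow_atTop_nhds_zero_of_norm_lt_one hz

private def e12 (n : ℕ) : C₀(ℕ, ℂ) where
  toFun := fun m => if m = n then 1 else 0
  continuous_toFun := continuous_of_discreteTopology
  zero_at_infty' := by
    rw [cocompact_eq_cofinite, Nat.cofinite_eq_atTop]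
    apply tendsto_nhds_of_eventually_eq
    filter_upwards [eventually_gt_atTop n] with m hm
    simp [Nat.ne_of_gt hm]

private def ev12 (m : ℕ) : C₀(ℕ, ℂ) →L[ℂ] ℂ :=
  LinearMap.mkContinuous
    { toFun := fun φ => φ m
      map_add' := fun φ ψ => rfl
      map_smul' := fun c φ => rfl } 1
    (fun φ => by
      rw [one_mul, ← ZeroAtInftyContinuousMap.norm_toBCF_eq_norm]
      exact BoundedContinuousFunction.norm_coe_le_norm φ.toBCF m)

private lemma ev12_apply (m : ℕ) (φ : C₀(ℕ, ℂ)) : ev12 m φ = φ m := rfl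

private lemma norm_apply_le12 (φ : C₀(ℕ, ℂ)) (m : ℕ) : ‖φ m‖ ≤ ‖φ‖ := by
  rw [← ZeroAtInftyContinuousMap.norm_toBCF_eq_norm]
  exact BoundedContinuousFunction.norm_coe_le_norm φ.toBCF m

private lemma norm_e12_le (n : ℕ) : ‖e12 n‖ ≤ 1 := by
  rw [← ZeroAtInftyContinuousMap.norm_toBCF_eq_norm]
  apply BoundedContinuousFunction.norm_le zero_le_one |>.2
  intro m
  by_cases h : m = n <;> simp [e12, h]

end Aux12
noncomputable section Aux12b

private def f12 : ℂ → C₀(ℕ, ℂ) := fun z =>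
  if h : ‖z‖ < 1 then fseq12 z h else 0

private lemma f12_apply {z : ℂ} (hz : ‖z‖ < 1) (n : ℕ) : f12 z n = z ^ n := by
  simp only [f12, dif_pos hz]; rfl

private lemma e12_apply (n m : ℕ) : e12 n m = if m = n then 1 else 0 := rfl

private def p12 : FormalMultilinearSeries ℂ ℂ (C₀(ℕ, ℂ)) := fun n =>
  ContinuousMultilinearMap.mkPiRing ℂ (Fin n) (e12 n)

private lemma hasSum12 {y : ℂ} (hy : ‖y‖ < 1) :
    HasSum (fun n : ℕ => y ^ n • e12 n) (f12 y) := by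
  have hsumm : Summable (fun n : ℕ => y ^ n • e12 n) := by
    apply Summable.of_norm_bounded (summable_geometric_of_lt_one (norm_nonneg y) hy)
    intro n
    rw [← ZeroAtInftyContinuousMap.norm_toBCF_eq_norm]
    apply (BoundedContinuousFunction.norm_le (by positivity)).2
    intro m
    show ‖(y ^ n • e12 n) m‖ ≤ ‖y‖ ^ n
    rw [ZeroAtInftyContinuousMap.smul_apply, e12_apply]
    by_cases h : m = n
    · simp [h, norm_pow]
    · simp [h, pow_nonneg (norm_nonneg y)]
  obtain ⟨S, hS⟩ := hsumm
  have hSf : S = f12 y := by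
    ext m
    have h1 : HasSum (fun n : ℕ => ev12 m (y ^ n • e12 n)) (ev12 m S) := (ev12 m).hasSum hS
    have h2 : (fun n : ℕ => ev12 m (y ^ n • e12 n)) = fun n => if n = m then y ^ m else 0 := by
      funext n
      rw [ev12_apply]
      rw [ZeroAtInftyContinuousMap.smul_apply, e12_apply]
      by_cases h : n = m
      · simp [h]
      · rw [if_neg (fun hh : m = n => h hh.symm), if_neg h, smul_zero]
    rw [h2] at h1
    have h3 := hasSum_ite_eq m (y ^ m)
    have := h1.unique h3
    rw [ev12_apply] at this
    rw [this, f12_apply hy]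
  rwa [hSf] at hS

end Aux12b
noncomputable section Aux12c

private lemma hfps12 : HasFPowerSeriesOnBall f12 p12 0 1 := by
  refine ⟨?_, one_pos, ?_⟩
  · apply ENNReal.le_of_forall_nnreal_lt
    intro r hr
    apply FormalMultilinearSeries.le_radius_of_bound _ 1
    intro n
    have h1 : ‖p12 n‖ ≤ 1 := by
      rw [p12, ContinuousMultilinearMap.norm_mkPiRing]; exact norm_e12_le n
    have hr1 : (r : ℝ) ≤ 1 := by exact_mod_cast hr.le
    calc ‖p12 n‖ * (r : ℝ) ^ n ≤ 1 * 1 ^ n := by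
          have h2 : (r : ℝ) ^ n ≤ 1 ^ n := pow_le_pow_left₀ r.coe_nonneg hr1 n
          exact mul_le_mul h1 h2 (pow_nonneg r.coe_nonneg n) zero_le_one
      _ = 1 := by rw [one_pow, one_mul]
  · intro y hy
    rw [mem_emetric_ball_zero_iff] at hy
    have hy' : ‖y‖ < 1 := by rw [← ofReal_norm] at hy; exact ENNReal.ofReal_lt_one.mp hy
    have h2 : (fun n : ℕ => p12 n fun _ => y) = fun n : ℕ => y ^ n • e12 n := by
      funext n
      simp [p12, ContinuousMultilinearMap.mkPiRing_apply]
    rw [h2, zero_add]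
    exact hasSum12 hy'

private lemma analyticOnNhd12 : AnalyticOnNhd ℂ f12 (Metric.ball 0 1) := by
  have := hfps12.analyticOnNhd
  rw [← ENNReal.coe_one, Metric.emetric_ball_nnreal] at this
  simpa using this

end Aux12c



open ZeroAtInfty

/-- The map `f : 𝔻 → c₀`, `f(z) = (zⁿ)ₙ`, is holomorphic on the open unit disc,
injective there, takes values in the closed unit ball of `c₀ = C₀(ℕ, ℂ)`, and is proper:
the preimage of any compact subset of `c₀` is a compact subset of `𝔻`. -/
theorem stmt12 :
    ∃ f : ℂ → C₀(ℕ, ℂ),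
      (∀ z : ℂ, ‖z‖ < 1 → ∀ n : ℕ, f z n = z ^ n) ∧
      AnalyticOnNhd ℂ f (Metric.ball 0 1) ∧
      Set.InjOn f (Metric.ball 0 1) ∧
      (∀ z ∈ Metric.ball (0 : ℂ) 1, ‖f z‖ ≤ 1) ∧
      (∀ K : Set C₀(ℕ, ℂ), IsCompact K →
        IsCompact (Metric.ball (0 : ℂ) 1 ∩ f ⁻¹' K)) := by
  refine ⟨f12, fun z hz n => f12_apply hz n, analyticOnNhd12, ?_, ?_, ?_⟩
  · -- injective
    intro z hz w hw h
    rw [Metric.mem_ball, dist_zero_right] at hz hw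
    have := congrArg (fun φ : C₀(ℕ, ℂ) => φ 1) h
    simpa [f12_apply hz, f12_apply hw] using this
  · -- norm bound
    intro z hz
    rw [Metric.mem_ball, dist_zero_right] at hz
    rw [← ZeroAtInftyContinuousMap.norm_toBCF_eq_norm]
    apply (BoundedContinuousFunction.norm_le zero_le_one).2
    intro n
    show ‖f12 z n‖ ≤ 1
    rw [f12_apply hz, norm_pow]
    exact pow_le_one₀ (norm_nonneg z) hz.le
  · -- proper
    intro K hK
    -- uniform smallness of tails on K
    have hcover : K ⊆ ⋃ φ ∈ K, Metric.ball φ (1/4) := fun φ hφ =>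
      Set.mem_biUnion hφ (Metric.mem_ball_self (by norm_num))
    obtain ⟨t, ht⟩ := hK.elim_finite_subcover_image (fun φ _ => Metric.isOpen_ball) hcover
    obtain ⟨htK, htfin, htcov⟩ := ht
    have hNf : ∀ φ : C₀(ℕ, ℂ), ∃ N : ℕ, ∀ n ≥ N, ‖φ n‖ < 1/4 := by
      intro φ
      have h0 := φ.zero_at_infty'
      rw [cocompact_eq_cofinite, Nat.cofinite_eq_atTop] at h0
      have := (NormedAddCommGroup.tendsto_nhds_zero.mp h0) (1/4) (by norm_num)
      exact eventually_atTop.mp this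
    choose Nf hNfs using hNf
    set N : ℕ := (htfin.toFinset.sup Nf) + 1 with hN
    have hN0 : N ≠ 0 := Nat.succ_ne_zero _
    have hKN : ∀ φ ∈ K, ‖φ N‖ ≤ 1/2 := by
      intro φ hφ
      obtain ⟨ψ, hψt, hψb⟩ := Set.mem_iUnion₂.mp (htcov hφ)
      have hψN : ‖ψ N‖ < 1/4 := by
        apply hNfs ψ N
        exact le_trans (Finset.le_sup (htfin.mem_toFinset.mpr hψt)) (Nat.le_succ _)
      have hdist : ‖φ N - ψ N‖ ≤ ‖φ - ψ‖ := by
        have := norm_apply_le12 (φ - ψ) N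
        rwa [ZeroAtInftyContinuousMap.sub_apply] at this
      have hd : ‖φ - ψ‖ < 1/4 := by
        rw [← dist_eq_norm]; exact Metric.mem_ball.mp hψb
      calc ‖φ N‖ = ‖(φ N - ψ N) + ψ N‖ := by rw [sub_add_cancel]
        _ ≤ ‖φ N - ψ N‖ + ‖ψ N‖ := norm_add_le _ _
        _ ≤ ‖φ - ψ‖ + ‖ψ N‖ := add_le_add_left hdist _
        _ ≤ 1/4 + 1/4 := add_le_add hd.le hψN.le
        _ = 1/2 := by norm_num
    set r : ℝ := (1/2 : ℝ) ^ ((N : ℝ)⁻¹) with hr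
    have hr0 : 0 ≤ r := Real.rpow_nonneg (by norm_num) _
    have hr1 : r < 1 := Real.rpow_lt_one (by norm_num) (by norm_num)
      (by positivity)
    have hsub : Metric.ball (0 : ℂ) 1 ∩ f12 ⁻¹' K ⊆ Metric.closedBall 0 r := by
      intro z ⟨hz, hzK⟩
      rw [Metric.mem_ball, dist_zero_right] at hz
      have hzN : ‖z‖ ^ N ≤ 1/2 := by
        have := hKN (f12 z) hzK
        rwa [f12_apply hz, norm_pow] at this
      rw [Metric.mem_closedBall, dist_zero_right]
      have hmono := Real.rpow_le_rpow (by positivity) hzN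
        (by positivity : (0:ℝ) ≤ (N : ℝ)⁻¹)
      rwa [← Real.rpow_natCast ‖z‖ N, ← Real.rpow_mul (norm_nonneg z),
        mul_inv_cancel₀ (by exact_mod_cast hN0), Real.rpow_one] at hmono
    have heq : Metric.ball (0 : ℂ) 1 ∩ f12 ⁻¹' K
        = Metric.closedBall 0 r ∩ f12 ⁻¹' K := by
      apply Set.Subset.antisymm
      · intro z hz
        exact ⟨hsub hz, hz.2⟩
      · intro z ⟨hz, hzK⟩
        refine ⟨?_, hzK⟩
        rw [Metric.mem_closedBall, dist_zero_right] at hz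
        rw [Metric.mem_ball, dist_zero_right]
        exact lt_of_le_of_lt hz hr1
    rw [heq]
    have hcont : ContinuousOn f12 (Metric.closedBall 0 r) := by
      apply (analyticOnNhd12.continuousOn).mono
      intro z hz
      rw [Metric.mem_closedBall, dist_zero_right] at hz
      rw [Metric.mem_ball, dist_zero_right]
      exact lt_of_le_of_lt hz hr1
    have hclosed : IsClosed (Metric.closedBall (0:ℂ) r ∩ f12 ⁻¹' K) :=
      hcont.preimage_isClosed_of_isClosed Metric.isClosed_closedBall hK.isClosed
    exact (isCompact_closedBall (0:ℂ) r).of_isClosed_subset hclosed Set.inter_subset_left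
end
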